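/- Let p be a prime and f : ℕ → ℕ. For all m, r ∈ ℕ with r < p, one has binom(p+1, m·p + r)_f ≡ ∑_{s=0}^{m} f(r + s·p) · f(m − s) (mod p). -/

import Mathlib

/-- The extended binomial coefficient `binom(k,n)_f`: the sum, over all
`k`-tuples `(π₁,…,π_k)` of nonnegative integers with `π₁ + ⋯ + π_k = n`,
of the products `f(π₁)⋯f(π_k)`. It counts the `f`-weighted integer
compositions of `n` with exactly `k` parts. -/
def extBinom (f : ℕ → ℕ) (k n : ℕ) : ℕ :=
  ∑ π ∈ Finset.Nat.antidiagonalTuple k n, ∏ i, f (π i)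

open Polynomial Finset

lemma extBinom_zero (f : ℕ → ℕ) (n : ℕ) :
    extBinom f 0 n = if n = 0 then 1 else 0 := by
  cases n with
  | zero => simp [extBinom]
  | succ n => simp [extBinom]

lemma extBinom_succ (f : ℕ → ℕ) (k n : ℕ) :
    extBinom f (k + 1) n = ∑ ab ∈ Finset.HasAntidiagonal.antidiagonal n, f ab.1 * extBinom f k ab.2 := by
  unfold extBinom
  simp_rw [Finset.mul_sum]
  rw [Finset.sum_sigma']
  refine (Finset.sum_nbij'
    (i := fun (x : Σ _ : ℕ × ℕ, Fin k → ℕ) => (Fin.cons x.1.1 x.2 : Fin (k + 1) → ℕ))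
    (j := fun (π : Fin (k + 1) → ℕ) => (⟨(π 0, ∑ i : Fin k, π i.succ), Fin.tail π⟩ :
      Σ _ : ℕ × ℕ, Fin k → ℕ))
    ?_ ?_ ?_ ?_ ?_).symm
  · rintro ⟨⟨a, b⟩, x⟩ hx
    simp only [Finset.mem_sigma, Finset.HasAntidiagonal.mem_antidiagonal,
      Finset.Nat.mem_antidiagonalTuple] at hx ⊢
    rw [Fin.sum_cons, hx.2, hx.1]
  · intro π hπ
    simp only [Finset.Nat.mem_antidiagonalTuple, Finset.mem_sigma,
      Finset.HasAntidiagonal.mem_antidiagonal] at hπ ⊢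
    refine ⟨?_, rfl⟩
    rw [← hπ, Fin.sum_univ_succ]
  · rintro ⟨⟨a, b⟩, x⟩ hx
    simp only [Finset.mem_sigma, Finset.mem_antidiagonal,
      Finset.Nat.mem_antidiagonalTuple] at hx
    have h1 : (Fin.cons a x : Fin (k + 1) → ℕ) 0 = a := rfl
    have h2 : Fin.tail (Fin.cons a x : Fin (k + 1) → ℕ) = x := Fin.tail_cons (α := fun _ => ℕ) a x
    refine Sigma.ext ?_ (by simpa using heq_of_eq h2)
    simp only [h1]
    have : ∑ i : Fin k, (Fin.cons a x : Fin (k + 1) → ℕ) i.succ = ∑ i, x i := by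
      refine Finset.sum_congr rfl fun i _ => ?_
      simp [Fin.cons_succ]
    simp [this, hx.2]
  · intro π hπ
    exact Fin.cons_self_tail π
  · rintro ⟨⟨a, b⟩, x⟩ hx
    rw [Fin.prod_univ_succ]
    have : ∀ i : Fin k, (Fin.cons a x : Fin (k + 1) → ℕ) i.succ = x i := fun i => Fin.cons_succ (α := fun _ => ℕ) a x i
    simp [this]

lemma extBinom_coeff (p : ℕ) [Fact p.Prime] (f : ℕ → ℕ) (N : ℕ)
    (k : ℕ) : ∀ n ≤ N, (extBinom f k n : ZMod p) =
      ((∑ i ∈ range (N + 1), C ((f i : ZMod p)) * X ^ i) ^ k).coeff n := by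
  set P : Polynomial (ZMod p) := ∑ i ∈ range (N + 1), C ((f i : ZMod p)) * X ^ i with hP
  have hcoeff : ∀ a ≤ N, P.coeff a = (f a : ZMod p) := by
    intro a ha
    rw [hP, finset_sum_coeff]
    simp only [coeff_C_mul, coeff_X_pow]
    rw [Finset.sum_eq_single a]
    · simp
    · intro b _ hb; simp [Ne.symm hb]
    · intro h; exact absurd (Finset.mem_range.mpr (Nat.lt_succ_of_le ha)) h
  induction k with
  | zero =>
    intro n _
    rw [pow_zero, coeff_one, extBinom_zero]
    split <;> simp_all
  | succ k ih =>
    intro n hn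
    rw [pow_succ', coeff_mul, extBinom_succ, Nat.cast_sum]
    refine Finset.sum_congr rfl fun ab hab => ?_
    rw [Finset.HasAntidiagonal.mem_antidiagonal] at hab
    have h1 : ab.1 ≤ N := le_trans (hab ▸ Nat.le_add_right _ _) hn
    have h2 : ab.2 ≤ N := le_trans (hab ▸ Nat.le_add_left _ _) hn
    rw [Nat.cast_mul, hcoeff ab.1 h1, ih ab.2 h2]

theorem extBinom_prime_succ_row (p : ℕ) (hp : p.Prime) (f : ℕ → ℕ)
    (m r : ℕ) (hr : r < p) :
    extBinom f (p + 1) (m * p + r) ≡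
      ∑ s ∈ Finset.range (m + 1), f (r + s * p) * f (m - s) [MOD p] := by
  haveI : Fact p.Prime := ⟨hp⟩
  set N := m * p + r with hN
  rw [← ZMod.natCast_eq_natCast_iff]
  set P : Polynomial (ZMod p) := ∑ i ∈ range (N + 1), C ((f i : ZMod p)) * X ^ i with hP
  have hcoeff : ∀ a ≤ N, P.coeff a = (f a : ZMod p) := by
    intro a ha
    rw [hP, finset_sum_coeff]
    simp only [coeff_C_mul, coeff_X_pow]
    rw [Finset.sum_eq_single a]
    · simp
    · intro b _ hb; simp [Ne.symm hb]
    · intro h; exact absurd (Finset.mem_range.mpr (Nat.lt_succ_of_le ha)) h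
  have hfrob : P ^ p = expand (ZMod p) p P := by
    have := Polynomial.map_frobenius_expand p P
    rw [ZMod.frobenius_zmod, Polynomial.map_id] at this
    exact this.symm
  have key : (extBinom f (p + 1) N : ZMod p) = (P ^ (p + 1)).coeff N :=
    extBinom_coeff p f N (p + 1) N le_rfl
  rw [key, pow_succ, coeff_mul, Finset.Nat.sum_antidiagonal_eq_sum_range_succ_mk]
  have hterm : ∀ i ∈ range (N + 1),
      (P ^ p).coeff i * P.coeff (N - i)
        = if p ∣ i then (f (i / p) : ZMod p) * (f (N - i) : ZMod p) else 0 := by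
    intro i hi
    rw [Finset.mem_range, Nat.lt_succ_iff] at hi
    rw [hfrob, Polynomial.coeff_expand hp.pos, hcoeff (N - i) (Nat.sub_le _ _)]
    split_ifs with h
    · rw [hcoeff (i / p) (le_trans (Nat.div_le_self _ _) hi)]
    · rw [zero_mul]
  dsimp only
  rw [Finset.sum_congr rfl hterm, ← Finset.sum_filter]
  have hsum : ∑ i ∈ (range (N + 1)).filter (p ∣ ·), (f (i / p) : ZMod p) * (f (N - i) : ZMod p)
      = ∑ s ∈ range (m + 1), (f s : ZMod p) * (f (N - s * p) : ZMod p) := by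
    refine (Finset.sum_nbij' (fun s => s * p) (fun i => i / p) ?_ ?_ ?_ ?_ ?_).symm
    · intro s hs
      rw [Finset.mem_range, Nat.lt_succ_iff] at hs
      have h1 : s * p ≤ m * p := Nat.mul_le_mul_right _ hs
      refine Finset.mem_filter.mpr ⟨Finset.mem_range.mpr ?_, dvd_mul_left p s⟩
      show s * p < N + 1
      omega
    · intro i hi
      obtain ⟨hi1, hi2⟩ := Finset.mem_filter.mp hi
      rw [Finset.mem_range, Nat.lt_succ_iff] at hi1
      rw [Finset.mem_range, Nat.lt_succ_iff]
      by_contra hc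
      push_neg at hc
      have h1 : (m + 1) * p ≤ (i / p) * p := Nat.mul_le_mul_right _ hc
      have h2 : (i / p) * p ≤ i := Nat.div_mul_le_self i p
      have h3 : (m + 1) * p = m * p + p := by ring
      omega
    · intro s _
      exact Nat.mul_div_cancel s hp.pos
    · intro i hi
      exact Nat.div_mul_cancel (Finset.mem_filter.mp hi).2
    · intro s _
      rw [Nat.mul_div_cancel s hp.pos]
  rw [hsum, Nat.cast_sum]
  rw [← Finset.sum_range_reflect (fun s => ((f (r + s * p) * f (m - s) : ℕ) : ZMod p)) (m + 1)]
  refine Finset.sum_congr rfl fun j hj => ?_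
  rw [Finset.mem_range, Nat.lt_succ_iff] at hj
  have h1 : j * p ≤ m * p := Nat.mul_le_mul_right _ hj
  have h2 : m + 1 - 1 - j = m - j := by omega
  have h3 : m - (m - j) = j := by omega
  have h4 : N - j * p = r + (m - j) * p := by
    rw [Nat.sub_mul]; omega
  rw [h2, h3, h4, Nat.cast_mul, mul_comm]
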